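/- Let V be a finite-dimensional complex inner product space, let A be a positive semidefinite operator on V, and let B be any operator on V. Then ‖AB − BA‖ ≤ ‖A‖ · ‖B‖. -/

import Mathlib

open scoped ComplexInnerProductSpace

open scoped NNReal ENNReal in
lemma aux_norm_sub_half {𝔸 : Type*} [CStarAlgebra 𝔸] [PartialOrder 𝔸] [StarOrderedRing 𝔸]
    {a : 𝔸} (ha : 0 ≤ a) : ‖a - algebraMap ℝ 𝔸 (‖a‖ / 2)‖ ≤ ‖a‖ / 2 := by
  have hsa : IsSelfAdjoint a := .of_nonneg ha
  have hC : IsSelfAdjoint (a - algebraMap ℝ 𝔸 (‖a‖ / 2)) :=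
    hsa.sub (IsSelfAdjoint.algebraMap 𝔸 (IsSelfAdjoint.all _))
  rw [← hC.toReal_spectralRadius_eq_norm]
  have hrad : spectralRadius ℝ (a - algebraMap ℝ 𝔸 (‖a‖ / 2)) ≤
      ENNReal.ofReal (‖a‖ / 2) := by
    refine iSup₂_le fun x hx => ?_
    rw [← spectrum.sub_singleton_eq] at hx
    obtain ⟨y, hy, rfl⟩ : ∃ y ∈ spectrum ℝ a, y - ‖a‖ / 2 = x := by
      simpa [Set.mem_sub] using hx
    have h0 : (0 : ℝ) ≤ y := spectrum_nonneg_of_nonneg ha hy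
    have hle : a ≤ algebraMap ℝ 𝔸 ‖a‖ := IsSelfAdjoint.le_algebraMap_norm_self hsa
    have h1 : y ≤ ‖a‖ := (le_algebraMap_iff_spectrum_le hsa).mp hle y hy
    have : ‖y - ‖a‖ / 2‖ ≤ ‖a‖ / 2 := by
      rw [Real.norm_eq_abs, abs_le]; constructor <;> linarith
    calc (‖y - ‖a‖ / 2‖₊ : ℝ≥0∞) = ENNReal.ofReal ‖y - ‖a‖ / 2‖ :=
          (ofReal_norm _).symm
      _ ≤ ENNReal.ofReal (‖a‖ / 2) := ENNReal.ofReal_le_ofReal this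
  calc (spectralRadius ℝ (a - algebraMap ℝ 𝔸 (‖a‖ / 2))).toReal
      ≤ (ENNReal.ofReal (‖a‖ / 2)).toReal := ENNReal.toReal_mono ENNReal.ofReal_ne_top hrad
    _ = ‖a‖ / 2 := ENNReal.toReal_ofReal (by positivity)

/-- For a positive semidefinite operator `A` and any operator `B`,
`‖AB − BA‖ ≤ ‖A‖ ‖B‖`. -/
theorem commutator_norm_le_of_positive
    {V : Type*} [NormedAddCommGroup V] [InnerProductSpace ℂ V] [FiniteDimensional ℂ V]
    (A B : V →L[ℂ] V) (hA : IsSelfAdjoint A)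
    (hApos : ∀ v : V, 0 ≤ (⟪v, A v⟫).re) :
    ‖A * B - B * A‖ ≤ ‖A‖ * ‖B‖ := by
  have : CompleteSpace V := FiniteDimensional.complete ℂ V
  have hpos : (0 : V →L[ℂ] V) ≤ A := by
    rw [ContinuousLinearMap.nonneg_iff_isPositive]
    refine ⟨ContinuousLinearMap.isSelfAdjoint_iff_isSymmetric.mp hA, fun x => ?_⟩
    have := hApos x
    rw [ContinuousLinearMap.reApplyInnerSelf]
    rwa [← inner_conj_symm, Complex.conj_re] at this
  set C : V →L[ℂ] V := A - algebraMap ℝ (V →L[ℂ] V) (‖A‖ / 2) with hCdef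
  have hCnorm : ‖C‖ ≤ ‖A‖ / 2 := aux_norm_sub_half hpos
  have hcomm : A * B - B * A = C * B - B * C := by
    simp only [hCdef, sub_mul, mul_sub, Algebra.algebraMap_eq_smul_one, smul_mul_assoc,
      mul_smul_comm, one_mul, mul_one]
    abel
  rw [hcomm]
  calc ‖C * B - B * C‖ ≤ ‖C * B‖ + ‖B * C‖ := norm_sub_le _ _
    _ ≤ ‖C‖ * ‖B‖ + ‖B‖ * ‖C‖ := add_le_add (norm_mul_le _ _) (norm_mul_le _ _)
    _ = 2 * ‖C‖ * ‖B‖ := by ring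
    _ ≤ 2 * (‖A‖ / 2) * ‖B‖ := by
        have hB : (0:ℝ) ≤ ‖B‖ := norm_nonneg _
        nlinarith [norm_nonneg C]
    _ = ‖A‖ * ‖B‖ := by ring
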